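/- In a Shapley-Scarf market with preferences from an objective indifferences domain, if the core of the market is non-empty, then for every tie-breaking profile ≻, the allocation TTC_≻(R) is in the core. -/

import Mathlib

open scoped Classical

namespace ShapleyScarf

/-- A weak preference relation: complete (total) and transitive, hence reflexive. -/
structure WeakOrder (H : Type*) where
  rel : H → H → Prop
  total : ∀ a b, rel a b ∨ rel b a
  trans : ∀ a b c, rel a b → rel b c → rel a c

namespace WeakOrder
variable {H : Type*}
/-- Strict part `P` of a weak preference. -/
def P (R : WeakOrder H) (a b : H) : Prop := R.rel a b ∧ ¬ R.rel b a
/-- Indifference part `I` of a weak preference. -/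
def I (R : WeakOrder H) (a b : H) : Prop := R.rel a b ∧ R.rel b a
end WeakOrder

/-- `lt` is a strict linear order on agents (a tie-breaking order). -/
def IsTieBreak {n : ℕ} (lt : Fin n → Fin n → Prop) : Prop :=
  (∀ a b, a ≠ b → lt a b ∨ lt b a) ∧ Transitive lt ∧ ∀ a, ¬ lt a a

section Defs
variable {n : ℕ} {H : Type*} {B : Type*}

/-- Strict part of the tie-broken preference `P_{i,≻}`: `a` above `b` iff
`a P b`, or `a I b` and the owner of `a` comes before the owner of `b` in `≻_i`. -/
def tieBroken (w : Fin n ≃ H) (R : WeakOrder H) (lt : Fin n → Fin n → Prop) (a b : H) : Prop :=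
  R.P a b ∨ (R.I a b ∧ lt (w.symm a) (w.symm b))

/-- The weak tie-broken relation `R_{i,≻}` (reflexive closure of the strict part). -/
def tieBrokenWeak (w : Fin n ≃ H) (R : WeakOrder H) (lt : Fin n → Fin n → Prop)
    (a b : H) : Prop :=
  a = b ∨ tieBroken w R lt a b

/-- The owner (in `S`) of the `pref`-best house among the endowments of the
remaining agents `S`; the agent with this endowment is whom `i` points at. -/
noncomputable def point (w : Fin n ≃ H) (pref : H → H → Prop) (S : Finset (Fin n))
    (i : Fin n) : Fin n :=
  if h : (S.filter fun m => ∀ j ∈ S, j = m ∨ pref (w m) (w j)).Nonempty then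
    (S.filter fun m => ∀ j ∈ S, j = m ∨ pref (w m) (w j)).min' h
  else i

/-- The agents of `S` lying on some trading cycle of the pointing map. -/
noncomputable def cycleAgents (w : Fin n ≃ H) (pref : Fin n → H → H → Prop)
    (S : Finset (Fin n)) : Finset (Fin n) :=
  S.filter fun i => ∃ k, 0 < k ∧ (fun j => point w (pref j) S j)^[k] i = i

/-- Top trading cycles on strict preferences, fuel-based recursion: in each round all
current trading cycles are executed and their agents removed. -/
noncomputable def TTCaux (w : Fin n ≃ H) (pref : Fin n → H → H → Prop) :
    ℕ → Finset (Fin n) → Fin n → H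
  | 0, _, i => w i
  | fuel + 1, S, i =>
      if i ∈ cycleAgents w pref S then w (point w (pref i) S i)
      else TTCaux w pref fuel (S \ cycleAgents w pref S) i

/-- Gale's top trading cycles algorithm for a strict preference profile. -/
noncomputable def TTCstrict (w : Fin n ≃ H) (pref : Fin n → H → H → Prop) : Fin n → H :=
  TTCaux w pref n Finset.univ

/-- Round (executed-cycle index, starting from 1) at which an agent is assigned. -/
noncomputable def TTCroundAux (w : Fin n ≃ H) (pref : Fin n → H → H → Prop) :
    ℕ → Finset (Fin n) → Fin n → ℕ
  | 0, _, _ => 1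
  | fuel + 1, S, i =>
      if i ∈ cycleAgents w pref S then 1
      else TTCroundAux w pref fuel (S \ cycleAgents w pref S) i + 1

/-- TTC with fixed tie-breaking: `TTC_≻(R) = TTC(R_≻)`. -/
noncomputable def TTCtb (w : Fin n ≃ H) (R : Fin n → WeakOrder H)
    (tb : Fin n → Fin n → Fin n → Prop) : Fin n → H :=
  TTCstrict w fun i => tieBroken w (R i) (tb i)

/-- The round in which agent `i` is assigned under `TTC_≻(R)`. -/
noncomputable def TTCtbRound (w : Fin n ≃ H) (R : Fin n → WeakOrder H)
    (tb : Fin n → Fin n → Fin n → Prop) (i : Fin n) : ℕ :=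
  TTCroundAux w (fun a => tieBroken w (R a) (tb a)) n Finset.univ i

/-- Objective indifferences w.r.t. the partition of `H` into the fibers of `blk`:
indifference holds exactly between houses in the same block. -/
def ObjInd (blk : H → B) (R : WeakOrder H) : Prop :=
  ∀ a b, R.I a b ↔ blk a = blk b

/-- `x` is blocked: some coalition `Q` can reallocate its own endowments making
all its members weakly better off and one strictly better off. -/
def Blocks (w : Fin n ≃ H) (R : Fin n → WeakOrder H) (x : Fin n → H) : Prop :=
  ∃ (Q : Finset (Fin n)) (y : Fin n ≃ H),
    Q.image (⇑y) = Q.image (⇑w) ∧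
    (∀ i ∈ Q, (R i).rel (y i) (x i)) ∧
    ∃ i ∈ Q, (R i).P (y i) (x i)

/-- `x` is weakly blocked: some nonempty coalition can reallocate its own
endowments making all of its members strictly better off. -/
def WeaklyBlocks (w : Fin n ≃ H) (R : Fin n → WeakOrder H) (x : Fin n → H) : Prop :=
  ∃ Q : Finset (Fin n), Q.Nonempty ∧ ∃ y : Fin n ≃ H,
    Q.image (⇑y) = Q.image (⇑w) ∧ ∀ i ∈ Q, (R i).P (y i) (x i)

/-- `y` Pareto dominates `x`. -/
def ParetoDom (R : Fin n → WeakOrder H) (y x : Fin n → H) : Prop :=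
  (∀ i, (R i).rel (y i) (x i)) ∧ ∃ i, (R i).P (y i) (x i)

end Defs


section CoreProof
variable {n : ℕ} {H : Type*} {B : Type*}

lemma WeakOrder.refl (R : WeakOrder H) (a : H) : R.rel a a := (R.total a a).elim id id

lemma tieBroken_rel (w : Fin n ≃ H) (R : WeakOrder H) (lt : Fin n → Fin n → Prop)
    {a b : H} (h : tieBroken w R lt a b) : R.rel a b := by
  rcases h with h | h
  · exact h.1
  · exact h.1.1

lemma tieBroken_trans (w : Fin n ≃ H) (R : WeakOrder H) {lt : Fin n → Fin n → Prop}
    (hlt : Transitive lt) {a b c : H} (hab : tieBroken w R lt a b)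
    (hbc : tieBroken w R lt b c) : tieBroken w R lt a c := by
  rcases hab with hab | ⟨hab, lab⟩ <;> rcases hbc with hbc | ⟨hbc, lbc⟩
  · exact Or.inl ⟨R.trans _ _ _ hab.1 hbc.1, fun h => hbc.2 (R.trans _ _ _ h hab.1)⟩
  · exact Or.inl ⟨R.trans _ _ _ hab.1 hbc.1, fun h => hab.2 (R.trans _ _ _ hbc.1 h)⟩
  · exact Or.inl ⟨R.trans _ _ _ hab.1 hbc.1, fun h => hbc.2 (R.trans _ _ _ h hab.1)⟩
  · exact Or.inr ⟨⟨R.trans _ _ _ hab.1 hbc.1, R.trans _ _ _ hbc.2 hab.2⟩, hlt lab lbc⟩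

lemma tieBroken_total (w : Fin n ≃ H) (R : WeakOrder H) {lt : Fin n → Fin n → Prop}
    (hlt : ∀ a b, a ≠ b → lt a b ∨ lt b a) {a b : H} (hab : a ≠ b) :
    tieBroken w R lt a b ∨ tieBroken w R lt b a := by
  by_cases h1 : R.rel a b <;> by_cases h2 : R.rel b a
  · have hne : w.symm a ≠ w.symm b := fun he => hab (w.symm.injective he)
    rcases hlt _ _ hne with h | h
    · exact Or.inl (Or.inr ⟨⟨h1, h2⟩, h⟩)
    · exact Or.inr (Or.inr ⟨⟨h2, h1⟩, h⟩)
  · exact Or.inl (Or.inl ⟨h1, h2⟩)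
  · exact Or.inr (Or.inl ⟨h2, h1⟩)
  · rcases R.total a b with h | h
    · exact absurd h h1
    · exact absurd h h2

lemma exists_pref_max (w : Fin n ≃ H) (pref : H → H → Prop)
    (htr : ∀ a b c, pref a b → pref b c → pref a c)
    (htot : ∀ a b : H, a ≠ b → pref a b ∨ pref b a)
    {S : Finset (Fin n)} (hS : S.Nonempty) :
    ∃ m ∈ S, ∀ j ∈ S, j = m ∨ pref (w m) (w j) := by
  classical
  revert hS
  induction S using Finset.induction_on with
  | empty => intro h; exact absurd h (by simp)
  | @insert a s ha ih =>
    intro _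
    rcases s.eq_empty_or_nonempty with rfl | hs
    · exact ⟨a, by simp, by simp⟩
    · obtain ⟨m, hm, hmax⟩ := ih hs
      have hwne : w a ≠ w m := fun he => ha (by rwa [w.injective he])
      rcases htot (w a) (w m) (hwne) with h | h
      · refine ⟨a, Finset.mem_insert_self _ _, ?_⟩
        intro j hj
        rcases Finset.mem_insert.1 hj with rfl | hj
        · exact Or.inl rfl
        · rcases hmax j hj with rfl | hjm
          · exact Or.inr h
          · exact Or.inr (htr _ _ _ h hjm)
      · refine ⟨m, Finset.mem_insert_of_mem hm, ?_⟩
        intro j hj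
        rcases Finset.mem_insert.1 hj with rfl | hj
        · by_cases hjm : j = m
          · exact Or.inl hjm
          · exact Or.inr h
        · exact hmax j hj
  done

lemma point_mem (w : Fin n ≃ H) (pref : H → H → Prop) {S : Finset (Fin n)} {i : Fin n}
    (hi : i ∈ S) : point w pref S i ∈ S := by
  unfold point
  split
  · exact (Finset.mem_filter.1 (Finset.min'_mem _ _)).1
  · exact hi

lemma point_spec (w : Fin n ≃ H) (pref : H → H → Prop)
    (htr : ∀ a b c, pref a b → pref b c → pref a c)
    (htot : ∀ a b : H, a ≠ b → pref a b ∨ pref b a)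
    {S : Finset (Fin n)} (hS : S.Nonempty) (i : Fin n) :
    ∀ j ∈ S, j = point w pref S i ∨ pref (w (point w pref S i)) (w j) := by
  obtain ⟨m, hm, hmax⟩ := exists_pref_max w pref htr htot hS
  have hne : (S.filter fun m => ∀ j ∈ S, j = m ∨ pref (w m) (w j)).Nonempty :=
    ⟨m, Finset.mem_filter.2 ⟨hm, hmax⟩⟩
  unfold point
  rw [dif_pos hne]
  exact (Finset.mem_filter.1 (Finset.min'_mem _ hne)).2

lemma iterate_mem {f : Fin n → Fin n} {S : Finset (Fin n)} (hf : ∀ j ∈ S, f j ∈ S)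
    {i : Fin n} (hi : i ∈ S) (k : ℕ) : f^[k] i ∈ S := by
  induction k with
  | zero => simpa
  | succ k ih => rw [Function.iterate_succ_apply']; exact hf _ ih

lemma mem_cycleAgents (w : Fin n ≃ H) (pref : Fin n → H → H → Prop) (S : Finset (Fin n))
    (i : Fin n) : i ∈ cycleAgents w pref S ↔
      i ∈ S ∧ ∃ k, 0 < k ∧ (fun j => point w (pref j) S j)^[k] i = i := by
  simp [cycleAgents]

lemma cycleAgents_subset (w : Fin n ≃ H) (pref : Fin n → H → H → Prop) (S : Finset (Fin n)) :
    cycleAgents w pref S ⊆ S := Finset.filter_subset _ _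

lemma cycleAgents_nonempty (w : Fin n ≃ H) (pref : Fin n → H → H → Prop) {S : Finset (Fin n)}
    (hS : S.Nonempty) (hf : ∀ j ∈ S, point w (pref j) S j ∈ S) :
    (cycleAgents w pref S).Nonempty := by
  classical
  set f : Fin n → Fin n := fun j => point w (pref j) S j with hfdef
  obtain ⟨i0, hi0⟩ := hS
  have hmaps : ∀ k : ℕ, f^[k] i0 ∈ S := fun k => iterate_mem hf hi0 k
  have hcard : S.card < (Finset.range (S.card + 1)).card := by simp
  obtain ⟨a, ha, b, hb, hne, heq⟩ :=
    Finset.exists_ne_map_eq_of_card_lt_of_maps_to hcard (fun k _ => hmaps k)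
  wlog hab : a < b generalizing a b
  · exact this b hb a ha hne.symm heq.symm (by omega)
  refine ⟨f^[a] i0, (mem_cycleAgents w pref S _).2 ⟨hmaps a, b - a, by omega, ?_⟩⟩
  show f^[b-a] (f^[a] i0) = f^[a] i0
  rw [← Function.iterate_add_apply]
  have : b - a + a = b := by omega
  rw [this, ← heq]

lemma cycleAgents_maps (w : Fin n ≃ H) (pref : Fin n → H → H → Prop) {S : Finset (Fin n)}
    (hf : ∀ j ∈ S, point w (pref j) S j ∈ S) {i : Fin n}
    (hi : i ∈ cycleAgents w pref S) :
    point w (pref i) S i ∈ cycleAgents w pref S := by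
  set f : Fin n → Fin n := fun j => point w (pref j) S j with hfdef
  obtain ⟨hiS, k, hk, hki⟩ := (mem_cycleAgents w pref S i).1 hi
  refine (mem_cycleAgents w pref S _).2 ⟨hf _ hiS, k, hk, ?_⟩
  show f^[k] (f i) = f i
  rw [← Function.iterate_succ_apply, Function.iterate_succ_apply']
  exact congrArg f hki

lemma cycleAgents_surj (w : Fin n ≃ H) (pref : Fin n → H → H → Prop) {S : Finset (Fin n)}
    (hf : ∀ j ∈ S, point w (pref j) S j ∈ S) {j : Fin n}
    (hj : j ∈ cycleAgents w pref S) :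
    ∃ i ∈ cycleAgents w pref S, point w (pref i) S i = j := by
  set f : Fin n → Fin n := fun j => point w (pref j) S j with hfdef
  obtain ⟨hjS, k, hk, hkj⟩ := (mem_cycleAgents w pref S j).1 hj
  refine ⟨f^[k-1] j, (mem_cycleAgents w pref S _).2 ⟨iterate_mem hf hjS _, k, hk, ?_⟩, ?_⟩
  · show f^[k] (f^[k-1] j) = f^[k-1] j
    rw [← Function.iterate_add_apply, Nat.add_comm, Function.iterate_add_apply, hkj]
  · show f (f^[k-1] j) = j
    have hkj' : f^[k] j = j := hkj
    have hsucc : f^[k - 1 + 1] j = f (f^[k-1] j) := Function.iterate_succ_apply' f (k-1) j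
    rw [← hsucc, show k - 1 + 1 = k from by omega, hkj']

lemma cycleAgents_injOn (w : Fin n ≃ H) (pref : Fin n → H → H → Prop) {S : Finset (Fin n)}
    (hf : ∀ j ∈ S, point w (pref j) S j ∈ S) :
    ∀ a ∈ cycleAgents w pref S, ∀ b ∈ cycleAgents w pref S,
      point w (pref a) S a = point w (pref b) S b → a = b := by
  classical
  intro a ha b hb hab
  exact Finset.inj_on_of_surj_on_of_card_le
    (s := cycleAgents w pref S) (t := cycleAgents w pref S)
    (fun i _ => point w (pref i) S i)
    (fun i hi => cycleAgents_maps w pref hf hi)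
    (fun j hj => by
      obtain ⟨i, hi, hij⟩ := cycleAgents_surj w pref hf hj
      exact ⟨i, hi, hij⟩)
    le_rfl ha hb hab

lemma cycleAgents_image (w : Fin n ≃ H) (pref : Fin n → H → H → Prop) {S : Finset (Fin n)}
    (hf : ∀ j ∈ S, point w (pref j) S j ∈ S) :
    (cycleAgents w pref S).image (fun i => point w (pref i) S i) = cycleAgents w pref S := by
  apply Finset.Subset.antisymm
  · intro a ha
    obtain ⟨i, hi, rfl⟩ := Finset.mem_image.1 ha
    exact cycleAgents_maps w pref hf hi
  · intro j hj
    obtain ⟨i, hi, hij⟩ := cycleAgents_surj w pref hf hj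
    exact Finset.mem_image.2 ⟨i, hi, hij⟩

lemma TTCaux_bij (w : Fin n ≃ H) (pref : Fin n → H → H → Prop)
    (htr : ∀ i a b c, pref i a b → pref i b c → pref i a c)
    (htot : ∀ i (a b : H), a ≠ b → pref i a b ∨ pref i b a) :
    ∀ fuel (S : Finset (Fin n)), S.card ≤ fuel →
      (∀ a ∈ S, ∀ b ∈ S, TTCaux w pref fuel S a = TTCaux w pref fuel S b → a = b) ∧
      S.image (TTCaux w pref fuel S) = S.image ⇑w := by
  intro fuel
  induction fuel with
  | zero =>
    intro S hcard
    have : S = ∅ := Finset.card_eq_zero.1 (Nat.le_zero.1 hcard)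
    subst this
    simp
  | succ fuel ih =>
    intro S hcard
    rcases S.eq_empty_or_nonempty with rfl | hS
    · simp
    have hf : ∀ j ∈ S, point w (pref j) S j ∈ S := fun j hj => point_mem w (pref j) hj
    set C := cycleAgents w pref S with hC
    have hCsub : C ⊆ S := cycleAgents_subset w pref S
    have hCne : C.Nonempty := cycleAgents_nonempty w pref hS hf
    have hcard' : (S \ C).card ≤ fuel := by
      have h1 : (S \ C).card = S.card - C.card := Finset.card_sdiff_of_subset hCsub
      have h2 : 0 < C.card := Finset.card_pos.2 hCne
      omega
    obtain ⟨ihinj, ihim⟩ := ih (S \ C) hcard'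
    have hval_mem : ∀ a ∈ S, a ∉ C → ∃ m ∈ S \ C, TTCaux w pref (fuel+1) S a = w m := by
      intro a haS haC
      have haSC : a ∈ S \ C := Finset.mem_sdiff.2 ⟨haS, haC⟩
      have : TTCaux w pref fuel (S \ C) a ∈ (S \ C).image (TTCaux w pref fuel (S \ C)) :=
        Finset.mem_image_of_mem _ haSC
      rw [ihim] at this
      obtain ⟨m, hm, hma⟩ := Finset.mem_image.1 this
      exact ⟨m, hm, by rw [show TTCaux w pref (fuel+1) S a = TTCaux w pref fuel (S \ C) a from
        by simp [TTCaux, ← hC, haC], ← hma]⟩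
    constructor
    · intro a haS b hbS heq
      by_cases haC : a ∈ C <;> by_cases hbC : b ∈ C
      · rw [show TTCaux w pref (fuel+1) S a = w (point w (pref a) S a) from by simp [TTCaux, ← hC, haC],
          show TTCaux w pref (fuel+1) S b = w (point w (pref b) S b) from by simp [TTCaux, ← hC, hbC]]
          at heq
        exact cycleAgents_injOn w pref hf a haC b hbC (w.injective heq)
      · exfalso
        obtain ⟨m, hm, hmeq⟩ := hval_mem b hbS hbC
        rw [hmeq, show TTCaux w pref (fuel+1) S a = w (point w (pref a) S a) from
          by simp [TTCaux, ← hC, haC]] at heq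
        have : point w (pref a) S a = m := w.injective heq
        have hmem : point w (pref a) S a ∈ C := cycleAgents_maps w pref hf haC
        rw [this] at hmem
        exact (Finset.mem_sdiff.1 hm).2 hmem
      · exfalso
        obtain ⟨m, hm, hmeq⟩ := hval_mem a haS haC
        rw [hmeq, show TTCaux w pref (fuel+1) S b = w (point w (pref b) S b) from
          by simp [TTCaux, ← hC, hbC]] at heq
        have : m = point w (pref b) S b := w.injective heq
        have hmem : point w (pref b) S b ∈ C := cycleAgents_maps w pref hf hbC
        rw [← this] at hmem
        exact (Finset.mem_sdiff.1 hm).2 hmem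
      · refine ihinj a (Finset.mem_sdiff.2 ⟨haS, haC⟩) b (Finset.mem_sdiff.2 ⟨hbS, hbC⟩) ?_
        rw [show TTCaux w pref (fuel+1) S a = TTCaux w pref fuel (S \ C) a from
          by simp [TTCaux, ← hC, haC],
          show TTCaux w pref (fuel+1) S b = TTCaux w pref fuel (S \ C) b from
          by simp [TTCaux, ← hC, hbC]] at heq
        exact heq
    · apply Finset.Subset.antisymm
      · intro h hh
        obtain ⟨a, haS, rfl⟩ := Finset.mem_image.1 hh
        by_cases haC : a ∈ C
        · rw [show TTCaux w pref (fuel+1) S a = w (point w (pref a) S a) from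
            by simp [TTCaux, ← hC, haC]]
          exact Finset.mem_image_of_mem _ (hf a haS)
        · obtain ⟨m, hm, hmeq⟩ := hval_mem a haS haC
          rw [hmeq]
          exact Finset.mem_image_of_mem _ (Finset.mem_sdiff.1 hm).1
      · intro h hh
        obtain ⟨m, hmS, rfl⟩ := Finset.mem_image.1 hh
        by_cases hmC : m ∈ C
        · obtain ⟨i, hi, hij⟩ := cycleAgents_surj w pref hf hmC
          refine Finset.mem_image.2 ⟨i, hCsub hi, ?_⟩
          rw [show TTCaux w pref (fuel+1) S i = w (point w (pref i) S i) from
            by simp [TTCaux, hi], hij]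
        · have : w m ∈ (S \ C).image (TTCaux w pref fuel (S \ C)) := by
            rw [ihim]; exact Finset.mem_image_of_mem _ (Finset.mem_sdiff.2 ⟨hmS, hmC⟩)
          obtain ⟨a, ha, haeq⟩ := Finset.mem_image.1 this
          have haC : a ∉ C := (Finset.mem_sdiff.1 ha).2
          refine Finset.mem_image.2 ⟨a, (Finset.mem_sdiff.1 ha).1, ?_⟩
          rw [show TTCaux w pref (fuel+1) S a = TTCaux w pref fuel (S \ C) a from
            by simp [TTCaux, ← hC, haC], haeq]

lemma blk_eq_of_unblocked (w : Fin n ≃ H) (blk : H → B) (R : Fin n → WeakOrder H)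
    (hR : ∀ i, ObjInd blk (R i)) (tb : Fin n → Fin n → Fin n → Prop)
    (htb : ∀ i, IsTieBreak (tb i)) (x : Fin n ≃ H) (hx : ¬ Blocks w R ⇑x) :
    ∀ fuel (S : Finset (Fin n)), S.card ≤ fuel →
      S.val.map (fun j => blk (x j)) = S.val.map (fun j => blk (w j)) →
      ∀ i ∈ S, blk (x i) =
        blk (TTCaux w (fun a => tieBroken w (R a) (tb a)) fuel S i) := by
  classical
  intro fuel
  induction fuel with
  | zero =>
    intro S hcard _ i hi
    have hSe : S = ∅ := Finset.card_eq_zero.1 (Nat.le_zero.1 hcard)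
    subst hSe; simp at hi
  | succ fuel ih =>
    intro S hcard hms i hiS
    set pref : Fin n → H → H → Prop := fun a => tieBroken w (R a) (tb a) with hpref
    have htr : ∀ j : Fin n, ∀ a b c, pref j a b → pref j b c → pref j a c :=
      fun j a b c hab hbc => tieBroken_trans w (R j) (htb j).2.1 hab hbc
    have htot : ∀ j : Fin n, ∀ a b : H, a ≠ b → pref j a b ∨ pref j b a :=
      fun j a b hne => tieBroken_total w (R j) (htb j).1 hne
    have hS : S.Nonempty := ⟨i, hiS⟩
    have hf : ∀ j ∈ S, point w (pref j) S j ∈ S := fun j hj => point_mem w (pref j) hj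
    set C := cycleAgents w pref S with hC
    have hCsub : C ⊆ S := cycleAgents_subset w pref S
    have hCne : C.Nonempty := cycleAgents_nonempty w pref hS hf
    set π : Fin n → Fin n := fun a => if a ∈ C then point w (pref a) S a else a with hπ
    have hπinj : Function.Injective π := by
      intro a b hab
      by_cases haC : a ∈ C <;> by_cases hbC : b ∈ C
      · simp only [hπ, if_pos haC, if_pos hbC] at hab
        exact cycleAgents_injOn w pref hf a haC b hbC hab
      · simp only [hπ, if_pos haC, if_neg hbC] at hab
        have := cycleAgents_maps w pref hf haC
        rw [hab] at this
        exact absurd this hbC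
      · simp only [hπ, if_neg haC, if_pos hbC] at hab
        have := cycleAgents_maps w pref hf hbC
        rw [← hab] at this
        exact absurd this haC
      · simpa only [hπ, if_neg haC, if_neg hbC] using hab
    have hπbij : Function.Bijective π := Finite.injective_iff_bijective.1 hπinj
    set y : Fin n ≃ H := (Equiv.ofBijective π hπbij).trans w with hy
    have hyval : ∀ a, y a = w (π a) := fun a => rfl
    have hyC : ∀ a ∈ C, y a = w (point w (pref a) S a) := by
      intro a ha
      rw [hyval]
      simp only [hπ, if_pos ha]
    have himg : C.image ⇑y = C.image ⇑w := by
      have h1 : C.image ⇑y = (C.image (fun a => point w (pref a) S a)).image ⇑w := by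
        rw [Finset.image_image]
        exact Finset.image_congr (fun a ha => hyC a ha)
      rw [h1, cycleAgents_image w pref hf]
    have hrel : ∀ j ∈ C, (R j).rel (y j) (x j) := by
      intro j hjC
      have hjS : j ∈ S := hCsub hjC
      have hmem : blk (x j) ∈ S.val.map (fun j => blk (w j)) := by
        rw [← hms]
        exact Multiset.mem_map_of_mem _ (Finset.mem_def.1 hjS)
      obtain ⟨m, hmS, hmblk⟩ := Multiset.mem_map.1 hmem
      have hmS' : m ∈ S := Finset.mem_def.2 hmS
      have hspec := point_spec w (pref j) (htr j) (htot j) hS j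
      have hrelwm : (R j).rel (y j) (w m) := by
        rcases hspec m hmS' with h | h
        · rw [hyC j hjC, ← h]; exact (R j).refl _
        · rw [hyC j hjC]; exact tieBroken_rel w (R j) (tb j) h
      have hI : (R j).I (w m) (x j) := ((hR j) _ _).2 hmblk
      exact (R j).trans _ _ _ hrelwm hI.1
    have hnostrict : ∀ j ∈ C, ¬ (R j).P (y j) (x j) := by
      intro j hjC hP
      exact hx ⟨C, y, himg, fun a ha => hrel a ha, j, hjC, hP⟩
    have hblkC : ∀ j ∈ C, blk (x j) = blk (y j) := by
      intro j hjC
      have h1 := hrel j hjC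
      have h2 : (R j).rel (x j) (y j) := by
        by_contra h
        exact hnostrict j hjC ⟨h1, h⟩
      exact ((hR j) _ _).1 ⟨h2, h1⟩
    by_cases hiC : i ∈ C
    · have hstep : TTCaux w pref (fuel+1) S i = w (point w (pref i) S i) := by
        have : i ∈ cycleAgents w pref S := hC ▸ hiC
        simp [TTCaux, this]
      rw [hstep, ← hyC i hiC]
      exact hblkC i hiC
    · have hstep : TTCaux w pref (fuel+1) S i = TTCaux w pref fuel (S \ C) i := by
        have : i ∉ cycleAgents w pref S := hC ▸ hiC
        simp [TTCaux, this, hC]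
      rw [hstep]
      have hcard' : (S \ C).card ≤ fuel := by
        have h1 : (S \ C).card = S.card - C.card := Finset.card_sdiff_of_subset hCsub
        have h2 : 0 < C.card := Finset.card_pos.2 hCne
        omega
      have hsplit : S.val = (S \ C).val + C.val := by
        have hle : C.val ≤ S.val := Finset.val_le_iff.2 hCsub
        rw [Finset.sdiff_val]
        exact (tsub_add_cancel_of_le hle).symm
      have hmapC : C.val.map (fun j => blk (x j)) = C.val.map (fun j => blk (w j)) := by
        have e1 : C.val.map (fun j => blk (x j))
            = C.val.map (fun j => blk (w (point w (pref j) S j))) :=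
          Multiset.map_congr rfl (fun j hj => by
            rw [hblkC j (Finset.mem_def.2 hj), hyC j (Finset.mem_def.2 hj)])
        have e3 : C.val.map (fun j => point w (pref j) S j) = C.val := by
          rw [← Finset.image_val_of_injOn
            (f := fun j => point w (pref j) S j) (s := C)
            (fun a ha b hb hab => cycleAgents_injOn w pref hf a
              (Finset.mem_coe.1 ha) b (Finset.mem_coe.1 hb) hab)]
          rw [cycleAgents_image w pref hf]
        calc C.val.map (fun j => blk (x j))
            = C.val.map (fun j => blk (w (point w (pref j) S j))) := e1
          _ = (C.val.map (fun j => point w (pref j) S j)).map (fun m => blk (w m)) := by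
              rw [Multiset.map_map]; rfl
          _ = C.val.map (fun j => blk (w j)) := by rw [e3]
      have hms' : (S \ C).val.map (fun j => blk (x j))
          = (S \ C).val.map (fun j => blk (w j)) := by
        have htmp := hms
        rw [hsplit, Multiset.map_add, Multiset.map_add, hmapC] at htmp
        exact add_right_cancel htmp
      exact ih (S \ C) hcard' hms' i (Finset.mem_sdiff.2 ⟨hiS, hiC⟩)

end CoreProof

/-- on an objective indifferences domain, if the core is non-empty then
every `TTC_≻` selects a core allocation. -/
theorem TTCtb_coreSelecting_objInd {n : ℕ} {H B : Type*} (w : Fin n ≃ H)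
    (blk : H → B) (R : Fin n → WeakOrder H) (hR : ∀ i, ObjInd blk (R i))
    (tb : Fin n → Fin n → Fin n → Prop) (htb : ∀ i, IsTieBreak (tb i))
    (hcore : ∃ x : Fin n ≃ H, ¬ Blocks w R ⇑x) :
    Function.Bijective (TTCtb w R tb) ∧ ¬ Blocks w R (TTCtb w R tb) := by
  classical
  obtain ⟨x, hx⟩ := hcore
  set pref : Fin n → H → H → Prop := fun a => tieBroken w (R a) (tb a) with hpref
  have htr : ∀ j : Fin n, ∀ a b c, pref j a b → pref j b c → pref j a c :=
    fun j a b c hab hbc => tieBroken_trans w (R j) (htb j).2.1 hab hbc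
  have htot : ∀ j : Fin n, ∀ a b : H, a ≠ b → pref j a b ∨ pref j b a :=
    fun j a b hne => tieBroken_total w (R j) (htb j).1 hne
  obtain ⟨hinj, him⟩ := TTCaux_bij w pref htr htot n Finset.univ (by simp)
  have hbij : Function.Bijective (TTCtb w R tb) := by
    constructor
    · intro a b hab
      exact hinj a (Finset.mem_univ a) b (Finset.mem_univ b) hab
    · intro h
      have hmem : h ∈ Finset.univ.image ⇑w :=
        Finset.mem_image.2 ⟨w.symm h, Finset.mem_univ _, w.apply_symm_apply h⟩
      rw [← him] at hmem
      obtain ⟨i, _, hi⟩ := Finset.mem_image.1 hmem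
      exact ⟨i, hi⟩
  have hms0 : Finset.univ.val.map (fun j => blk (x j))
      = Finset.univ.val.map (fun j => blk (w j)) := by
    have h1 : Finset.univ.val.map ⇑x = Finset.univ.val.map ⇑w := by
      refine (Multiset.Nodup.ext ?_ ?_).2 ?_
      · exact Multiset.Nodup.map x.injective Finset.univ.nodup
      · exact Multiset.Nodup.map w.injective Finset.univ.nodup
      · intro a
        constructor
        · intro _
          exact Multiset.mem_map.2 ⟨w.symm a, Finset.mem_def.1 (Finset.mem_univ _),
            w.apply_symm_apply a⟩
        · intro _
          exact Multiset.mem_map.2 ⟨x.symm a, Finset.mem_def.1 (Finset.mem_univ _),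
            x.apply_symm_apply a⟩
    have h2 := congrArg (Multiset.map blk) h1
    rw [Multiset.map_map, Multiset.map_map] at h2
    exact h2
  have hkey : ∀ i, blk (x i) = blk (TTCtb w R tb i) := fun i =>
    blk_eq_of_unblocked w blk R hR tb htb x hx n Finset.univ (by simp) hms0 i
      (Finset.mem_univ i)
  refine ⟨hbij, ?_⟩
  rintro ⟨Q, y, himg, hrel, i0, hi0, hP⟩
  apply hx
  refine ⟨Q, y, himg, ?_, i0, hi0, ?_⟩
  · intro i hi
    have h1 := hrel i hi
    have hI : (R i).I (TTCtb w R tb i) (x i) := ((hR i) _ _).2 (hkey i).symm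
    exact (R i).trans _ _ _ h1 hI.1
  · have hI : (R i0).I (TTCtb w R tb i0) (x i0) := ((hR i0) _ _).2 (hkey i0).symm
    refine ⟨(R i0).trans _ _ _ hP.1 hI.1, ?_⟩
    intro h
    exact hP.2 ((R i0).trans _ _ _ hI.1 h)

end ShapleyScarf
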